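/- The network weight of a compact Hausdorff space equals its weight; in particular, a compact Hausdorff space with a network of cardinality κ has a base of cardinality at most κ. -/
import Mathlib

open Cardinal

/-- `N` is a network for `X`. -/
def IsNetwork {X : Type u} [TopologicalSpace X] (N : Set (Set X)) : Prop :=
  ∀ x : X, ∀ U : Set X, IsOpen U → x ∈ U → ∃ n ∈ N, x ∈ n ∧ n ⊆ U

/-- Arhangel'skii: for a compact Hausdorff space the network weight equals the weight;
i.e., for every infinite `κ`, there is a network of cardinality at most `κ` iff there is
a base of cardinality at most `κ`. In particular, a network of cardinality `κ` yields a
base of cardinality at most `κ`. -/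
theorem networkWeight_eq_weight {X : Type u} [TopologicalSpace X] [CompactSpace X]
    [T2Space X] (κ : Cardinal.{u}) (hκ : Cardinal.aleph0 ≤ κ) :
    (∃ N : Set (Set X), IsNetwork N ∧ #N ≤ κ) ↔
      ∃ B : Set (Set X), TopologicalSpace.IsTopologicalBasis B ∧ #B ≤ κ := by
  classical
  constructor
  · rintro ⟨N, hN, hNκ⟩
    -- pairs of network elements with disjoint closures
    set P : Set (Set X × Set X) :=
      {p | p.1 ∈ N ∧ p.2 ∈ N ∧ Disjoint (closure p.1) (closure p.2)} with hPdef
    have hsep : ∀ p : P, ∃ UV : Set X × Set X, IsOpen UV.1 ∧ IsOpen UV.2 ∧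
        closure (p : Set X × Set X).1 ⊆ UV.1 ∧ closure (p : Set X × Set X).2 ⊆ UV.2 ∧
        Disjoint UV.1 UV.2 := by
      rintro ⟨p, hp1, hp2, hpd⟩
      obtain ⟨U, V, hU, hV, hsU, hsV, hUV⟩ :=
        NormalSpace.normal (closure p.1) (closure p.2) isClosed_closure isClosed_closure hpd
      exact ⟨(U, V), hU, hV, hsU, hsV, hUV⟩
    choose f hf1 hf2 hf3 hf4 hf5 using hsep
    set S : Set (Set X) := Set.range (fun p => (f p).1) ∪ Set.range (fun p => (f p).2) with hSdef
    have hSopen : ∀ s ∈ S, IsOpen s := by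
      rintro s (⟨p, rfl⟩ | ⟨p, rfl⟩)
      exacts [hf1 p, hf2 p]
    have hSκ : #S ≤ κ := by
      have hP : #P ≤ κ := by
        have : P ⊆ N ×ˢ N := fun p hp => ⟨hp.1, hp.2.1⟩
        calc #P ≤ #(↥(N ×ˢ N)) := Cardinal.mk_le_mk_of_subset this
          _ = #N * #N := by
            rw [Cardinal.mk_congr (Equiv.Set.prod N N), Cardinal.mk_prod, Cardinal.lift_id']
          _ ≤ κ * κ := mul_le_mul' hNκ hNκ
          _ = κ := Cardinal.mul_eq_self hκ
      calc #S ≤ #(Set.range (fun p : P => (f p).1)) + #(Set.range (fun p : P => (f p).2)) :=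
            Cardinal.mk_union_le _ _
        _ ≤ #P + #P := add_le_add Cardinal.mk_range_le Cardinal.mk_range_le
        _ ≤ κ + κ := add_le_add hP hP
        _ = κ := Cardinal.add_eq_self hκ
    -- the basis: finite intersections of members of S
    set B : Set (Set X) := Set.range (fun F : Finset S => ⋂₀ (Subtype.val '' (F : Set S)))
      with hBdef
    refine ⟨B, ?_, ?_⟩
    · apply TopologicalSpace.isTopologicalBasis_of_isOpen_of_nhds
      · rintro b ⟨F, rfl⟩
        exact Set.Finite.isOpen_sInter (F.finite_toSet.image _)
          (by rintro s ⟨t, ht, rfl⟩; exact hSopen t t.2)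
      · intro x W hxW hW
        -- for each y outside W, find a pair in P separating x from y
        have key : ∀ y : (Wᶜ : Set X), ∃ p : P, x ∈ (f p).1 ∧ (y : X) ∈ (f p).2 := by
          rintro ⟨y, hy⟩
          have hxy : x ≠ y := fun h => hy (h ▸ hxW)
          obtain ⟨O1, O2, hO1, hO2, hxO1, hyO2, hO12⟩ := t2_separation hxy
          obtain ⟨P1, hP1, hxP1, hcP1⟩ := normal_exists_closure_subset
            (isClosed_singleton (x := x)) hO1 (Set.singleton_subset_iff.mpr hxO1)
          obtain ⟨P2, hP2, hyP2, hcP2⟩ := normal_exists_closure_subset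
            (isClosed_singleton (x := y)) hO2 (Set.singleton_subset_iff.mpr hyO2)
          obtain ⟨Mx, hMxN, hxMx, hMxP1⟩ := hN x P1 hP1 (hxP1 rfl)
          obtain ⟨My, hMyN, hyMy, hMyP2⟩ := hN y P2 hP2 (hyP2 rfl)
          have hd : Disjoint (closure Mx) (closure My) :=
            hO12.mono ((closure_mono hMxP1).trans hcP1) ((closure_mono hMyP2).trans hcP2)
          refine ⟨⟨(Mx, My), hMxN, hMyN, hd⟩, ?_, ?_⟩
          · exact hf3 _ (subset_closure hxMx)
          · exact hf4 _ (subset_closure hyMy)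
        choose g hg1 hg2 using key
        have hcomp : IsCompact (Wᶜ) := (hW.isClosed_compl).isCompact
        have hcover : Wᶜ ⊆ ⋃ y : (Wᶜ : Set X), (f (g y)).2 := by
          intro y hy
          exact Set.mem_iUnion.mpr ⟨⟨y, hy⟩, hg2 ⟨y, hy⟩⟩
        obtain ⟨t, ht⟩ := hcomp.elim_finite_subcover (fun y => (f (g y)).2)
          (fun y => hf2 _) hcover
        -- candidate basic open set
        refine ⟨⋂₀ (Subtype.val '' ((t.image fun y => (⟨(f (g y)).1,
            Or.inl ⟨g y, rfl⟩⟩ : S)) : Set S)), ⟨_, rfl⟩, ?_, ?_⟩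
        · rintro _ ⟨s, hs, rfl⟩
          simp only [Finset.coe_image, Set.mem_image, Finset.mem_coe] at hs
          obtain ⟨y, _, rfl⟩ := hs
          exact hg1 y
        · intro z hz
          by_contra hzW
          obtain ⟨y, hyt, hzy⟩ := Set.mem_iUnion₂.mp (ht hzW)
          have hzU : z ∈ (f (g y)).1 := by
            refine Set.mem_sInter.mp hz _ ⟨⟨(f (g y)).1, Or.inl ⟨g y, rfl⟩⟩, ?_, rfl⟩
            simp only [Finset.coe_image, Set.mem_image, Finset.mem_coe]
            exact ⟨y, hyt, rfl⟩
          exact Set.disjoint_left.mp (hf5 (g y)) hzU hzy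
    · have : #B ≤ #(Finset S) := Cardinal.mk_range_le
      refine this.trans ?_
      by_cases hfin : S.Finite
      · haveI := hfin.fintype
        exact le_trans (le_of_lt (Cardinal.lt_aleph0_of_finite _)) hκ
      · haveI : Infinite S := Set.infinite_coe_iff.mpr hfin
        rw [Cardinal.mk_finset_of_infinite]
        exact hSκ
  · rintro ⟨B, hB, hBκ⟩
    exact ⟨B, fun x U hU hxU => hB.exists_subset_of_mem_open hxU hU, hBκ⟩
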